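/- Let p be a prime and let R be a finite commutative local ring with maximal ideal M whose residue field R/M has characteristic ℓ ≠ p. Then M + (R^×)^p = (R^×)^p; that is, for every m ∈ M and every unit x ∈ R^× there exists a unit y ∈ R^× with m + x^p = y^p. (Consequently M is a homogeneous set in G_R(p).) -/

import Mathlib

lemma step_lemma {R : Type*} [CommRing R] [IsLocalRing R] (ℓ : ℕ) (hℓ : ℓ.Prime)
    (hℓM : (ℓ : R) ∈ IsLocalRing.maximalIdeal R)
    (j : ℕ) (hj : 1 ≤ j) (n : R) (hn : n ∈ (IsLocalRing.maximalIdeal R) ^ j) :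
    ∃ n' ∈ (IsLocalRing.maximalIdeal R) ^ (j + 1), (1 + n) ^ ℓ = 1 + n' := by
  set M := IsLocalRing.maximalIdeal R with hM
  have hnM : n ∈ M := Ideal.pow_le_self (by omega) hn
  have hpow : ∀ i, 1 ≤ i → n ^ i ∈ M ^ j := by
    intro i hi
    obtain ⟨i', rfl⟩ := Nat.exists_eq_add_of_le hi
    rw [add_comm, pow_succ]
    exact Ideal.mul_mem_left _ _ hn
  refine ⟨∑ k ∈ Finset.range ℓ, n ^ (k+1) * (ℓ.choose (k+1) : R), ?_, ?_⟩
  · refine Ideal.sum_mem _ fun k hk => ?_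
    rw [Finset.mem_range] at hk
    rcases eq_or_lt_of_le (Nat.succ_le_of_lt hk) with heq | hlt
    · -- k+1 = ℓ, so k ≥ 1
      have hk1 : 1 ≤ k := by have := hℓ.two_le; omega
      have h1 : n ^ (k+1) ∈ M ^ (j+1) := by
        rw [pow_succ M, pow_succ n]
        exact Ideal.mul_mem_mul (hpow k hk1) hnM
      exact Ideal.mul_mem_right _ _ h1
    · obtain ⟨c, hc⟩ := hℓ.dvd_choose_self (Nat.succ_ne_zero k) hlt
      rw [hc]
      push_cast
      rw [pow_succ M]
      exact Ideal.mul_mem_mul (hpow (k+1) (by omega)) (Ideal.mul_mem_right _ _ hℓM)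
  · rw [add_comm (1:R) n, add_pow]
    rw [Finset.sum_range_succ']
    simp [pow_succ, mul_comm, add_comm]

lemma iter_lemma {R : Type*} [CommRing R] [IsLocalRing R] (ℓ : ℕ) (hℓ : ℓ.Prime)
    (hℓM : (ℓ : R) ∈ IsLocalRing.maximalIdeal R)
    (n : R) (hn : n ∈ IsLocalRing.maximalIdeal R) (i : ℕ) :
    ∃ n' ∈ (IsLocalRing.maximalIdeal R) ^ (1 + i), (1 + n) ^ ℓ ^ i = 1 + n' := by
  induction i with
  | zero => exact ⟨n, by simpa using hn, by simp⟩
  | succ i ih =>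
    obtain ⟨n', hn', heq⟩ := ih
    obtain ⟨n'', hn'', heq'⟩ := step_lemma ℓ hℓ hℓM (1 + i) (by omega) n' hn'
    refine ⟨n'', hn'', ?_⟩
    rw [pow_succ, pow_mul, heq, heq']

theorem stmt_0 (p : ℕ) (hp : p.Prime) (R : Type*) [CommRing R] [IsLocalRing R] [Fintype R]
    (ℓ : ℕ) (hℓ : ℓ.Prime) (hchar : CharP (IsLocalRing.ResidueField R) ℓ) (hℓp : ℓ ≠ p) :
    ∀ m ∈ IsLocalRing.maximalIdeal R, ∀ x : Rˣ, ∃ y : Rˣ,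
      m + (x : R) ^ p = (y : R) ^ p := by
  intro m hm x
  -- ℓ lies in the maximal ideal
  have hℓM : (ℓ : R) ∈ IsLocalRing.maximalIdeal R := by
    rw [← IsLocalRing.ker_residue, RingHom.mem_ker, map_natCast]
    exact CharP.cast_eq_zero _ ℓ
  -- the maximal ideal is nilpotent
  have : IsArtinianRing R := inferInstance
  obtain ⟨K, hK⟩ : IsNilpotent (IsLocalRing.maximalIdeal R) := by
    have h := IsArtinianRing.isNilpotent_jacobson_bot (R := R)
    rwa [IsLocalRing.jacobson_eq_maximalIdeal ⊥ bot_ne_top] at h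
  -- the relevant element of 1 + M
  set n : R := ((x⁻¹ : Rˣ) : R) ^ p * m with hn_def
  have hn : n ∈ IsLocalRing.maximalIdeal R := Ideal.mul_mem_left _ _ hm
  obtain ⟨n', hn', heq⟩ := iter_lemma ℓ hℓ hℓM n hn K
  have hn'0 : n' = 0 := by
    have : (IsLocalRing.maximalIdeal R) ^ (1 + K) ≤ ⊥ := by
      rw [add_comm, pow_succ, hK]
      simp
    simpa using this hn'
  rw [hn'0, add_zero] at heq
  -- 1 + n is a unit of ℓ-power order
  set L : ℕ := ℓ ^ (K + 1) with hL
  have hvL : (1 + n) ^ L = 1 := by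
    rw [hL, pow_succ, pow_mul, heq, one_pow]
  have hL1 : 1 < L := Nat.one_lt_pow (by omega) hℓ.one_lt
  have hcop : Nat.Coprime L p := (Nat.coprime_primes hℓ hp).mpr hℓp |>.pow_left _
  obtain ⟨a, -, ha⟩ := Nat.exists_mul_mod_eq_one_of_coprime hcop.symm hL1
  -- p * a = 1 + L * b
  have hb : ∃ b, p * a = 1 + L * b := by
    refine ⟨p * a / L, ?_⟩
    conv_lhs => rw [← Nat.div_add_mod (p * a) L]
    rw [ha]; ring
  obtain ⟨b, hb⟩ := hb
  have hvpa : ((1 + n) ^ a) ^ p = 1 + n := by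
    rw [← pow_mul, mul_comm a p, hb, pow_add, pow_one, pow_mul, hvL, one_pow, mul_one]
  -- 1 + n is a unit
  have hvu : IsUnit (1 + n) := by
    refine IsUnit.of_mul_eq_one (a := 1 + n) ((1 + n) ^ (L - 1)) ?_
    rw [← pow_succ']; rw [Nat.sub_add_cancel (by omega)]; exact hvL
  refine ⟨x * (hvu.unit) ^ a, ?_⟩
  have key : ((hvu.unit : R) ^ a) ^ p = 1 + n := by
    rw [IsUnit.unit_spec]; exact hvpa
  push_cast
  rw [mul_pow, ← pow_mul, pow_mul, key, hn_def]
  have hxx : (x : R) ^ p * (((x⁻¹ : Rˣ) : R) ^ p * m) = m := by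
    rw [← mul_assoc, ← mul_pow, ← Units.val_mul, mul_inv_cancel]
    simp
  rw [mul_add, mul_one, hxx, add_comm]
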